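/- Fix a prime p, an additive character ψ of ℚ_p with conductor ℤ_p, an integer c ≥ 1, and a continuous group homomorphism ω : ℤ_pˣ → ℂˣ with conductor exponent c. Let μ be a Haar measure on the additive group ℚ_p. Then for every y ∈ ℚ_p whose p-adic norm satisfies ‖y‖ ≠ p^c, one has ∫_{ℤ_pˣ} ω(z) ψ(yz) dμ(z) = 0. -/

import Mathlib

open MeasureTheory

private lemma padic_measurePreserving_unit_mul
    (p : ℕ) [Fact p.Prime] [MeasurableSpace ℚ_[p]] [BorelSpace ℚ_[p]]
    (μ : Measure ℚ_[p]) [μ.IsAddHaarMeasure]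
    (a : ℚ_[p]) (ha : ‖a‖ = 1) :
    MeasurePreserving (fun x : ℚ_[p] => a * x) μ μ := by
  have ha0 : a ≠ 0 := by intro h; simp [h] at ha
  have hcont : Continuous (fun x : ℚ_[p] => a * x) := continuous_mul_left a
  have hsurj : Function.Surjective (fun x : ℚ_[p] => a * x) := fun z =>
    ⟨a⁻¹ * z, by field_simp⟩
  haveI hhaar : (μ.map (fun x : ℚ_[p] => a * x)).IsAddHaarMeasure := by
    have := Measure.isAddHaarMeasure_map μ (AddMonoidHom.mulLeft a)
      (by simpa using hcont) (by simpa using hsurj)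
      (by simpa using (Homeomorph.mulLeft₀ a ha0).isClosedEmbedding.tendsto_cocompact)
    simpa using this
  set ν := μ.map (fun x : ℚ_[p] => a * x) with hν
  have huniq : ν = ν.addHaarScalarFactor μ • μ :=
    Measure.isAddLeftInvariant_eq_smul ν μ
  set k := ν.addHaarScalarFactor μ with hk
  set B := Metric.closedBall (0:ℚ_[p]) 1 with hB
  have hBmeas : MeasurableSet B := measurableSet_closedBall
  have hpre : (fun x : ℚ_[p] => a * x) ⁻¹' B = B := by
    ext x
    simp [hB, Metric.mem_closedBall, dist_zero_right, norm_mul, ha]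
  have hmapB : ν B = μ B := by
    rw [hν, Measure.map_apply hcont.measurable hBmeas, hpre]
  have hBpos : 0 < μ B := lt_of_lt_of_le (Metric.measure_ball_pos μ 0 one_pos)
    (measure_mono Metric.ball_subset_closedBall)
  have hBfin : μ B < ⊤ := (isCompact_closedBall (0:ℚ_[p]) 1).measure_lt_top
  have hkB : (k : ENNReal) * μ B = 1 * μ B := by
    rw [one_mul]
    conv_rhs => rw [← hmapB]
    rw [huniq]
    simp [Measure.smul_apply, smul_eq_mul]
  have hk1 : (k : ENNReal) = 1 :=
    (ENNReal.mul_left_inj (ne_of_gt hBpos) (ne_of_lt hBfin)).1 hkB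
  have hmap : ν = μ := by
    rw [huniq]
    have hk1' : k = 1 := by exact_mod_cast hk1
    simp [hk1']
  exact ⟨hcont.measurable, hmap⟩

private lemma padic_norm_add_eq_left (p : ℕ) [Fact p.Prime]
    {w t : ℚ_[p]} (h : ‖t‖ < ‖w‖) : ‖w + t‖ = ‖w‖ := by
  rw [Padic.add_eq_max_of_ne (ne_of_gt h)]
  exact max_eq_left h.le

private lemma padic_mkUnits_mul (p : ℕ) [Fact p.Prime]
    {u v : ℚ_[p]} (hu : ‖u‖ = 1) (hv : ‖v‖ = 1) (huv : ‖u * v‖ = 1) :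
    PadicInt.mkUnits huv = PadicInt.mkUnits hu * PadicInt.mkUnits hv := by
  apply Units.ext
  apply Subtype.ext
  push_cast [PadicInt.mkUnits_eq]
  rfl

private lemma vanish_aux
    (p : ℕ) [Fact p.Prime] [MeasurableSpace ℚ_[p]] [BorelSpace ℚ_[p]]
    (μ : Measure ℚ_[p]) [μ.IsAddHaarMeasure]
    (g : ℚ_[p] → ℂ) (S : Set ℚ_[p]) (hg0 : ∀ z ∉ S, g z = 0)
    (T : ℚ_[p] → ℚ_[p]) (hT : MeasurePreserving T μ μ) (hTe : MeasurableEmbedding T)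
    (α : ℂ) (hα : α ≠ 1) (hgT : ∀ z, g (T z) = α * g z) :
    ∫ z in S, g z ∂μ = 0 := by
  have h1 : ∫ z in S, g z ∂μ = ∫ z, g z ∂μ :=
    setIntegral_eq_integral_of_forall_compl_eq_zero hg0
  have h2 : ∫ z, g z ∂μ = α * ∫ z, g z ∂μ := by
    conv_lhs => rw [← hT.integral_comp hTe g]
    simp only [hgT]
    exact integral_const_mul α g
  have h3 : ∫ z, g z ∂μ = 0 := by
    by_contra h
    have h4 : (1 : ℂ) * ∫ z, g z ∂μ = α * ∫ z, g z ∂μ := by rw [one_mul]; exact h2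
    exact hα (mul_right_cancel₀ h h4).symm
  rw [h1, h3]

open scoped Classical in
/-- **Vanishing of p-adic Gauss sums.** Let `ψ` be an additive character of `ℚ_p` with
conductor `ℤ_p` (a continuous hom `(ℚ_p,+) → (ℂˣ of modulus 1)` trivial on `ℤ_p` but not on
`p⁻¹ℤ_p`), and let `ω : ℤ_pˣ → ℂˣ` be a continuous character with conductor exponent
`c ≥ 1` (trivial on `1 + p^c ℤ_p`, nontrivial on `1 + p^{c-1} ℤ_p`).  For any Haar measure
`μ` on `(ℚ_p, +)` and any `y ∈ ℚ_p` with `‖y‖ ≠ p^c`, the Gauss sum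
`∫_{ℤ_pˣ} ω(z) ψ(yz) dμ(z)` vanishes.  Here `ℤ_pˣ = {z ∈ ℚ_p : ‖z‖ = 1}` and membership in
`p^k ℤ_p` is expressed as `‖·‖ ≤ p^{-k}`. -/
theorem gauss_sum_vanishes
    (p : ℕ) [Fact p.Prime]
    [MeasurableSpace ℚ_[p]] [BorelSpace ℚ_[p]]
    (μ : MeasureTheory.Measure ℚ_[p]) [μ.IsAddHaarMeasure]
    (ψ : ℚ_[p] → ℂ)
    (hψ_cont : Continuous ψ)
    (hψ_hom : ∀ x y : ℚ_[p], ψ (x + y) = ψ x * ψ y)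
    (hψ_circ : ∀ x : ℚ_[p], ‖ψ x‖ = 1)
    (hψ_triv : ∀ x : ℚ_[p], ‖x‖ ≤ 1 → ψ x = 1)
    (hψ_nontriv : ∃ x₀ : ℚ_[p], ‖x₀‖ ≤ p ∧ ψ x₀ ≠ 1)
    (c : ℕ) (hc : 1 ≤ c)
    (ω : ℤ_[p]ˣ →* ℂˣ)
    (hω_cont : Continuous ω)
    (hω_triv : ∀ z : ℤ_[p]ˣ, ‖(z : ℤ_[p]) - 1‖ ≤ (p : ℝ) ^ (-(c : ℤ)) → ω z = 1)
    (hω_nontriv : ∃ z₀ : ℤ_[p]ˣ, ‖(z₀ : ℤ_[p]) - 1‖ ≤ (p : ℝ) ^ (-((c : ℤ) - 1)) ∧ ω z₀ ≠ 1)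
    (y : ℚ_[p]) (hy : ‖y‖ ≠ (p : ℝ) ^ (c : ℤ)) :
    ∫ z in {z : ℚ_[p] | ‖z‖ = 1},
      (if h : ‖z‖ = 1 then ((ω (PadicInt.mkUnits h) : ℂˣ) : ℂ) else 0) * ψ (y * z) ∂μ
      = 0 := by
  have hp1 : (1 : ℝ) < p := by exact_mod_cast (Fact.out : p.Prime).one_lt
  have hp0 : (0 : ℝ) < p := lt_trans one_pos hp1
  set g : ℚ_[p] → ℂ := fun z =>
    (if h : ‖z‖ = 1 then ((ω (PadicInt.mkUnits h) : ℂˣ) : ℂ) else 0) * ψ (y * z) with hg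
  have hg0 : ∀ z ∉ {z : ℚ_[p] | ‖z‖ = 1}, g z = 0 := by
    intro z hz
    simp only [Set.mem_setOf_eq] at hz
    simp [hg, dif_neg hz]
  by_cases hA : ‖y‖ ≤ (p : ℝ) ^ ((c : ℤ) - 1)
  · -- small y : use multiplicative translation by z₀
    obtain ⟨z₀, hz₀, hz₀ne⟩ := hω_nontriv
    set a : ℚ_[p] := ((z₀ : ℤ_[p]) : ℚ_[p]) with haa
    have ha : ‖a‖ = 1 := by
      rw [haa, ← PadicInt.norm_def]
      exact PadicInt.norm_units z₀
    have ha0 : a ≠ 0 := by intro h; simp [h] at ha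
    have ha1 : ‖a - 1‖ ≤ (p : ℝ) ^ (-((c : ℤ) - 1)) := by
      have : a - 1 = (((z₀ : ℤ_[p]) - 1 : ℤ_[p]) : ℚ_[p]) := by push_cast; ring
      rw [this, ← PadicInt.norm_def]
      exact hz₀
    have hαne : ((ω z₀ : ℂˣ) : ℂ) ≠ 1 := fun h => hz₀ne (Units.ext (by simpa using h))
    refine vanish_aux p μ g _ hg0 (fun x => a * x)
      (padic_measurePreserving_unit_mul p μ a ha)
      ((Homeomorph.mulLeft₀ a ha0).measurableEmbedding) _ hαne ?_
    intro z
    by_cases h : ‖z‖ = 1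
    · have haz : ‖a * z‖ = 1 := by rw [norm_mul, ha, h, one_mul]
      have hmk : PadicInt.mkUnits haz = z₀ * PadicInt.mkUnits h := by
        rw [padic_mkUnits_mul p ha h haz]
        congr 1
        exact Units.ext (Subtype.ext rfl)
      have hψeq : ψ (y * (a * z)) = ψ (y * z) := by
        have hsplit : y * (a * z) = y * z + y * z * (a - 1) := by ring
        have hle : ‖y * z * (a - 1)‖ ≤ 1 := by
          rw [norm_mul, norm_mul, h, mul_one]
          calc ‖y‖ * ‖a - 1‖ ≤ (p : ℝ) ^ ((c : ℤ) - 1) * (p : ℝ) ^ (-((c : ℤ) - 1)) := by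
                exact mul_le_mul hA ha1 (norm_nonneg _) (by positivity)
          _ = 1 := by
                rw [← zpow_add₀ (ne_of_gt hp0)]
                simp
        rw [hsplit, hψ_hom, hψ_triv _ hle, mul_one]
      simp only [hg, dif_pos haz, dif_pos h, hψeq, hmk, map_mul, Units.val_mul]
      ring
    · have haz : ¬ ‖a * z‖ = 1 := by
        rw [norm_mul, ha, one_mul]; exact h
      simp [hg, dif_neg h, dif_neg haz]
  · -- large y : use additive translation by s = x₀ / y
    obtain ⟨x₀, hx₀, hx₀ne⟩ := hψ_nontriv
    push_neg at hA
    have hy0 : y ≠ 0 := by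
      intro h
      rw [h, norm_zero] at hA
      exact absurd hA (not_lt.2 (by positivity))
    have hval : ‖y‖ = (p : ℝ) ^ (-y.valuation) := Padic.norm_eq_zpow_neg_valuation hy0
    set m : ℤ := -y.valuation with hm
    have hm1 : (c : ℤ) - 1 < m := by
      rw [hval] at hA
      exact (zpow_lt_zpow_iff_right₀ hp1).1 hA
    have hmne : m ≠ (c : ℤ) := by
      intro h
      exact hy (by rw [hval, h])
    have hm2 : (c : ℤ) + 1 ≤ m := by omega
    have hylarge : (p : ℝ) ^ ((c : ℤ) + 1) ≤ ‖y‖ := by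
      rw [hval]
      exact zpow_le_zpow_right₀ hp1.le hm2
    set s : ℚ_[p] := x₀ * y⁻¹ with hs
    have hys : y * s = x₀ := by
      rw [hs]; field_simp
    have hsle : ‖s‖ ≤ (p : ℝ) ^ (-(c : ℤ)) := by
      rw [hs, norm_mul, norm_inv]
      have hynorm : (0:ℝ) < ‖y‖ := norm_pos_iff.2 hy0
      calc ‖x₀‖ * ‖y‖⁻¹ ≤ (p : ℝ) * ((p : ℝ) ^ ((c : ℤ) + 1))⁻¹ := by
            apply mul_le_mul hx₀ _ (by positivity) hp0.le
            exact inv_anti₀ (by positivity) hylarge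
      _ = (p : ℝ) ^ (-(c : ℤ)) := by
            rw [← zpow_neg, ← zpow_one_add₀ (ne_of_gt hp0)]
            congr 1
            ring
  
    have hslt1 : ‖s‖ < 1 := by
      refine lt_of_le_of_lt hsle ?_
      have : (p : ℝ) ^ (-(c : ℤ)) < (p : ℝ) ^ (0 : ℤ) :=
        zpow_lt_zpow_right₀ hp1 (by omega)
      simpa using this
    have hαne : ψ x₀ ≠ 1 := hx₀ne
    refine vanish_aux p μ g _ hg0 (fun x => x + s)
      (measurePreserving_add_right μ s)
      ((Homeomorph.addRight s).measurableEmbedding) _ hαne ?_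
    intro z
    by_cases h : ‖z‖ = 1
    · have h' : ‖z + s‖ = 1 := by
        rw [padic_norm_add_eq_left p (by rw [h]; exact hslt1), h]
      -- ω part
      set u := PadicInt.mkUnits h with hu
      set u' := PadicInt.mkUnits h' with hu'
      set w : ℤ_[p]ˣ := u⁻¹ * u' with hw
      have hkey : ((w : ℤ_[p]ˣ) : ℤ_[p]) - 1
          = ((u⁻¹ : ℤ_[p]ˣ) : ℤ_[p]) * (((u' : ℤ_[p]ˣ) : ℤ_[p]) - ((u : ℤ_[p]ˣ) : ℤ_[p])) := by
        rw [hw, Units.val_mul, mul_sub, u.inv_mul]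
      have hsubnorm : ‖((u' : ℤ_[p]ˣ) : ℤ_[p]) - ((u : ℤ_[p]ˣ) : ℤ_[p])‖ = ‖s‖ := by
        rw [PadicInt.norm_def]
        push_cast [hu, hu', PadicInt.mkUnits_eq]
        congr 1
        ring
      have hwnorm : ‖((w : ℤ_[p]ˣ) : ℤ_[p]) - 1‖ ≤ (p : ℝ) ^ (-(c : ℤ)) := by
        rw [hkey, norm_mul, PadicInt.norm_units, one_mul, hsubnorm]
        exact hsle
      have hωw : ω w = 1 := hω_triv w hwnorm
      have huu : u' = u * w := by rw [hw, mul_inv_cancel_left]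
      have hωeq : ω u' = ω u := by rw [huu, map_mul, hωw, mul_one]
      have hψeq : ψ (y * (z + s)) = ψ (y * z) * ψ x₀ := by
        rw [mul_add, hψ_hom, hys]
      simp only [hg, dif_pos h', dif_pos h, ← hu, ← hu', hωeq, hψeq]
      ring
    · have h' : ¬ ‖z + s‖ = 1 := by
        intro h1
        apply h
        have : ‖z + s + (-s)‖ = ‖z + s‖ :=
          padic_norm_add_eq_left p (by rw [norm_neg, h1]; exact hslt1)
        simpa [h1] using this
      simp [hg, dif_neg h, dif_neg h']
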